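/- Assume κ = κ̂ and 0 < λ < 1, and let P₈ = (V₈, C₈) where V₈ = V_+ and C₈ = 1 + V₈ > 0. Then F(P₈) = G(P₈) = 0, and the partial derivatives of F and G at P₈ are given by: ∂F/∂C = 2C₈², ∂F/∂V = C₈(k₂ - 2k₁(1+V₈)), ∂G/∂C = 2nC₈(V₈ - V_*) = 2V₈(λ + V₈), and ∂G/∂V = C₈(n - λ + nV_* - 2V₈). In particular ∂F/∂C > 0 and ∂G/∂C > 0 at P₈. -/

import Mathlib

noncomputable section

/-- `V_* = (κ - 2(λ-1))/(nγ)` -/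
def Vstar (n γ lam κ : ℝ) : ℝ := (κ - 2*(lam - 1)) / (n*γ)

/-- `α = (κ(γ-1) + 2(λ-1))/(2γ)` -/
def alphaP (γ lam κ : ℝ) : ℝ := (κ*(γ - 1) + 2*(lam - 1)) / (2*γ)

/-- `k₁ = 1 + (n-1)(γ-1)/2` -/
def K1 (n γ : ℝ) : ℝ := 1 + (n - 1)*(γ - 1)/2

/-- `k₂ = ((n-1)(γ-1) + (γ-3)(λ-1))/2` -/
def K2 (n γ lam : ℝ) : ℝ := ((n - 1)*(γ - 1) + (γ - 3)*(lam - 1)) / 2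

/-- `k₃ = (γ-1)(λ-1)/2` -/
def K3 (γ lam : ℝ) : ℝ := (γ - 1)*(lam - 1)/2

/-- `G(V,C) = nC²(V - V_*) - V(1+V)(λ+V)` -/
def Gf (n γ lam κ V C : ℝ) : ℝ := n*C^2*(V - Vstar n γ lam κ) - V*(1+V)*(lam+V)

/-- `F(V,C) = C[C²(1 + α/(1+V)) - k₁(1+V)² + k₂(1+V) - k₃]` -/
def Ff (n γ lam κ V C : ℝ) : ℝ :=
  C*(C^2*(1 + alphaP γ lam κ/(1+V)) - K1 n γ*(1+V)^2 + K2 n γ lam*(1+V) - K3 γ lam)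

/-- The isentropic exponent `κ̂ = 2(1-λ)/(γ-1)`. -/
def khat (γ lam : ℝ) : ℝ := 2*(1 - lam)/(γ - 1)

/-- `a = ((γ-3)/(m(γ-1)))μ - 1`, with `m = n-1`, `μ = λ-1`. -/
def aIs (n γ lam : ℝ) : ℝ := ((γ - 3)/((n-1)*(γ - 1)))*(lam - 1) - 1

/-- `Q = ((γ-3)/(m(γ-1)))²μ² - 2((γ+1)/(m(γ-1)))μ + 1`. -/
def QIs (n γ lam : ℝ) : ℝ :=
  ((γ - 3)/((n-1)*(γ - 1)))^2*(lam - 1)^2 - 2*((γ + 1)/((n-1)*(γ - 1)))*(lam - 1) + 1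

/-- `V₊ = (a + √Q)/2` in the isentropic case `κ = κ̂`. -/
def VpIs (n γ lam : ℝ) : ℝ := (aIs n γ lam + Real.sqrt (QIs n γ lam))/2

/-- `V₋ = (a - √Q)/2` in the isentropic case `κ = κ̂`. -/
def VmIs (n γ lam : ℝ) : ℝ := (aIs n γ lam - Real.sqrt (QIs n γ lam))/2

/-- `F_C`: the partial derivative `∂F/∂C` at `P₈ = (V₊, 1+V₊)`, with `κ = κ̂`. -/
def FCd (n γ lam : ℝ) : ℝ :=
  deriv (fun C => Ff n γ lam (khat γ lam) (VpIs n γ lam) C) (1 + VpIs n γ lam)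

/-- `F_V`: the partial derivative `∂F/∂V` at `P₈ = (V₊, 1+V₊)`, with `κ = κ̂`. -/
def FVd (n γ lam : ℝ) : ℝ :=
  deriv (fun V => Ff n γ lam (khat γ lam) V (1 + VpIs n γ lam)) (VpIs n γ lam)

/-- `G_C`: the partial derivative `∂G/∂C` at `P₈ = (V₊, 1+V₊)`, with `κ = κ̂`. -/
def GCd (n γ lam : ℝ) : ℝ :=
  deriv (fun C => Gf n γ lam (khat γ lam) (VpIs n γ lam) C) (1 + VpIs n γ lam)

/-- `G_V`: the partial derivative `∂G/∂V` at `P₈ = (V₊, 1+V₊)`, with `κ = κ̂`. -/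
def GVd (n γ lam : ℝ) : ℝ :=
  deriv (fun V => Gf n γ lam (khat γ lam) V (1 + VpIs n γ lam)) (VpIs n γ lam)

/-- with `κ = κ̂` and `0 < λ < 1`, at `P₈ = (V₈, C₈) = (V₊, 1+V₊)` one has
`F(P₈) = G(P₈) = 0`, `F_C = 2C₈²`, `F_V = C₈(k₂ - 2k₁(1+V₈))`,
`G_C = 2nC₈(V₈ - V_*) = 2V₈(λ+V₈)`, `G_V = C₈(n - λ + nV_* - 2V₈)`;
in particular `F_C > 0` and `G_C > 0`. -/
theorem stmt_13 (n γ lam : ℝ) (hn : n = 2 ∨ n = 3) (hγ : 1 < γ)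
    (h0 : 0 < lam) (h1 : lam < 1) :
    let κ := khat γ lam
    let V8 := VpIs n γ lam
    let C8 := 1 + V8
    Ff n γ lam κ V8 C8 = 0 ∧ Gf n γ lam κ V8 C8 = 0 ∧
    FCd n γ lam = 2*C8^2 ∧
    FVd n γ lam = C8*(K2 n γ lam - 2*K1 n γ*(1+V8)) ∧
    GCd n γ lam = 2*n*C8*(V8 - Vstar n γ lam κ) ∧
    GCd n γ lam = 2*V8*(lam + V8) ∧
    GVd n γ lam = C8*(n - lam + n*Vstar n γ lam κ - 2*V8) ∧
    0 < FCd n γ lam ∧ 0 < GCd n γ lam := by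
  intro κ V8 C8
  have hκ : κ = khat γ lam := rfl
  have hC8eq : C8 = 1 + V8 := rfl
  have hV8 : V8 = VpIs n γ lam := rfl
  have hγ1 : γ - 1 ≠ 0 := sub_ne_zero.mpr (ne_of_gt hγ)
  have hγ0 : γ ≠ 0 := by linarith
  have hmpos : (0:ℝ) < n - 1 := by rcases hn with rfl|rfl <;> norm_num
  have hm0 : n - 1 ≠ 0 := ne_of_gt hmpos
  have hnpos : (0:ℝ) < n := by linarith
  have hn0 : n ≠ 0 := ne_of_gt hnpos
  have halpha : alphaP γ lam κ = 0 := by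
    rw [hκ]; unfold alphaP khat; field_simp; ring
  have hw : Vstar n γ lam κ = -2*(lam-1)/(n*(γ-1)) := by
    rw [hκ]; unfold Vstar khat; field_simp; ring
  set a := aIs n γ lam with ha
  set s := Real.sqrt (QIs n γ lam) with hsdef
  have hQid : QIs n γ lam = (a + 2)^2 + 4*(1-lam)/(n-1) := by
    rw [ha]; unfold QIs aIs; field_simp; ring
  have hQa : QIs n γ lam = a^2 + 8*(1-lam)/((n-1)*(γ-1)) := by
    rw [ha]; unfold QIs aIs; field_simp; ring
  have hd1 : 0 < 4*(1-lam)/(n-1) := div_pos (by linarith) hmpos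
  have hd2 : 0 < 8*(1-lam)/((n-1)*(γ-1)) :=
    div_pos (by linarith) (mul_pos hmpos (by linarith))
  have hQpos : 0 < QIs n γ lam := by nlinarith [sq_nonneg (a+2)]
  have hs0 : 0 ≤ s := Real.sqrt_nonneg _
  have hss : s^2 = QIs n γ lam := Real.sq_sqrt hQpos.le
  have hV8as : V8 = (a + s)/2 := rfl
  have hC8pos : 0 < 1 + V8 := by
    rw [hV8as]; nlinarith [hss, hQid, hs0]
  have hV8pos : 0 < V8 := by
    rw [hV8as]; nlinarith [hss, hQa, hs0]
  have h5 : V8^2 - a*V8 = 2*(1-lam)/((n-1)*(γ-1)) := by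
    rw [hV8as]; linear_combination (1/4)*hss + (1/4)*hQa
  have ha2 : (n-1)*(γ-1)*a = (γ-3)*(lam-1) - (n-1)*(γ-1) := by
    rw [ha]; unfold aIs; field_simp
  have hclear : (n-1)*(γ-1)*(2*(1-lam)/((n-1)*(γ-1))) = 2*(1-lam) := by
    field_simp
  have hquadc : (n-1)*(γ-1)*V8^2 - ((γ-3)*(lam-1) - (n-1)*(γ-1))*V8 + 2*(lam-1) = 0 := by
    linear_combination (n-1)*(γ-1)*h5 + V8*ha2 + hclear
  have hw2 : n*(γ-1)*Vstar n γ lam κ = -2*(lam-1) := by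
    rw [hw]; field_simp
  have E : (1+V8)^2 - K1 n γ*(1+V8)^2 + K2 n γ lam*(1+V8) - K3 γ lam = 0 := by
    unfold K1 K2 K3; linear_combination (-1/2)*hquadc
  have hGzero : n*(1+V8)*(V8 - Vstar n γ lam κ) - V8*(lam+V8) = 0 := by
    have hGc : (γ-1)*(n*(1+V8)*(V8 - Vstar n γ lam κ) - V8*(lam+V8)) = 0 := by
      linear_combination hquadc - (1+V8)*hw2
    exact (mul_eq_zero.mp hGc).resolve_left hγ1
  have hV8' : VpIs n γ lam = V8 := rfl
  have hFfun : (fun C => Ff n γ lam (khat γ lam) (VpIs n γ lam) C)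
      = (fun C => C^3 - (K1 n γ*(1+V8)^2 - K2 n γ lam*(1+V8) + K3 γ lam)*C) := by
    funext C
    unfold Ff
    rw [← hκ, halpha, hV8']
    ring
  have hFC : FCd n γ lam
      = 3*(1+V8)^2 - (K1 n γ*(1+V8)^2 - K2 n γ lam*(1+V8) + K3 γ lam) := by
    unfold FCd
    rw [hFfun, hV8']
    have h := ((hasDerivAt_pow 3 ((1:ℝ)+V8)).sub
      ((hasDerivAt_id' ((1:ℝ)+V8)).const_mul
        (K1 n γ*(1+V8)^2 - K2 n γ lam*(1+V8) + K3 γ lam))).deriv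
    simp only [Pi.sub_def] at h
    rw [h]; push_cast; ring
  have hFVfun : (fun V => Ff n γ lam (khat γ lam) V (1 + VpIs n γ lam))
      = (fun V => (1+V8)^3 - K1 n γ*(1+V8)*(1+V)^2 + K2 n γ lam*(1+V8)*(1+V)
          - K3 γ lam*(1+V8)) := by
    funext V
    unfold Ff
    rw [← hκ, halpha, hV8']
    ring
  have hFVd : HasDerivAt (fun V : ℝ => (1+V8)^3 - K1 n γ*(1+V8)*(1+V)^2
      + K2 n γ lam*(1+V8)*(1+V) - K3 γ lam*(1+V8))
      ((1+V8)*(K2 n γ lam - 2*K1 n γ*(1+V8))) V8 := by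
    have h1 : HasDerivAt (fun V : ℝ => 1 + V) 1 V8 := (hasDerivAt_id' V8).const_add 1
    have h2 := (h1.pow 2).const_mul (K1 n γ*(1+V8))
    have h3 := h1.const_mul (K2 n γ lam*(1+V8))
    have h4 := (((hasDerivAt_const V8 ((1+V8)^3)).sub h2).add h3).sub
      (hasDerivAt_const V8 (K3 γ lam*(1+V8)))
    exact h4.congr_deriv (by push_cast; ring)
  have hFV : FVd n γ lam = (1+V8)*(K2 n γ lam - 2*K1 n γ*(1+V8)) := by
    unfold FVd
    rw [hFVfun, hV8']
    exact hFVd.deriv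
  have hGfun : (fun C => Gf n γ lam (khat γ lam) (VpIs n γ lam) C)
      = (fun C => n*(V8 - Vstar n γ lam κ)*C^2 - V8*(1+V8)*(lam+V8)) := by
    funext C
    unfold Gf
    rw [← hκ, hV8']
    ring
  have hGC : GCd n γ lam = 2*n*(1+V8)*(V8 - Vstar n γ lam κ) := by
    unfold GCd
    rw [hGfun, hV8']
    have h := (((hasDerivAt_pow 2 ((1:ℝ)+V8)).const_mul
      (n*(V8 - Vstar n γ lam κ))).sub_const (V8*(1+V8)*(lam+V8))).deriv
    rw [h]; push_cast; ring
  have hGVfun : (fun V => Gf n γ lam (khat γ lam) V (1 + VpIs n γ lam))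
      = (fun V => n*(1+V8)^2*(V - Vstar n γ lam κ) - V*(1+V)*(lam+V)) := by
    funext V
    unfold Gf
    rw [← hκ, hV8']
  have hGVd : HasDerivAt (fun V : ℝ => n*(1+V8)^2*(V - Vstar n γ lam κ)
      - V*(1+V)*(lam+V))
      (n*(1+V8)^2 - ((1+V8)*(lam+V8) + V8*(lam+V8) + V8*(1+V8))) V8 := by
    have h1 : HasDerivAt (fun V : ℝ => n*(1+V8)^2*(V - Vstar n γ lam κ))
        (n*(1+V8)^2*1) V8 :=
      ((hasDerivAt_id' V8).sub_const (Vstar n γ lam κ)).const_mul (n*(1+V8)^2)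
    have h2 := ((hasDerivAt_id' V8).mul ((hasDerivAt_id' V8).const_add 1)).mul
      ((hasDerivAt_id' V8).const_add lam)
    exact (h1.sub h2).congr_deriv (by simp only [Pi.mul_apply]; ring)
  have hGV : GVd n γ lam
      = n*(1+V8)^2 - ((1+V8)*(lam+V8) + V8*(lam+V8) + V8*(1+V8)) := by
    unfold GVd
    rw [hGVfun, hV8']
    exact hGVd.deriv
  have g3 : FCd n γ lam = 2*(1+V8)^2 := by
    rw [hFC]; linear_combination E
  have g6 : GCd n γ lam = 2*V8*(lam + V8) := by
    rw [hGC]; linear_combination 2*hGzero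
  clear_value κ V8 C8 a s
  rw [hC8eq]
  refine ⟨?_, ?_, ?_, ?_, ?_, ?_, ?_, ?_, ?_⟩
  · show Ff n γ lam κ V8 (1+V8) = 0
    unfold Ff
    rw [halpha]
    linear_combination (1+V8)*E
  · show Gf n γ lam κ V8 (1+V8) = 0
    unfold Gf
    linear_combination (1+V8)*hGzero
  · show FCd n γ lam = 2*(1+V8)^2
    exact g3
  · show FVd n γ lam = (1+V8)*(K2 n γ lam - 2*K1 n γ*(1+V8))
    exact hFV
  · show GCd n γ lam = 2*n*(1+V8)*(V8 - Vstar n γ lam κ)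
    exact hGC
  · show GCd n γ lam = 2*V8*(lam + V8)
    exact g6
  · show GVd n γ lam = (1+V8)*(n - lam + n*Vstar n γ lam κ - 2*V8)
    rw [hGV]; linear_combination hGzero
  · show 0 < FCd n γ lam
    rw [g3]
    have := pow_pos hC8pos 2
    linarith
  · show 0 < GCd n γ lam
    rw [g6]
    have h7 : 0 < lam + V8 := by linarith
    have := mul_pos hV8pos h7
    linarith
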